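/- Let A, B, C be complex with C not a nonpositive integer, and let D_N be a sequence of complex numbers, none a nonpositive integer, with −N/D_N → q ∈ (0,1) as N → ∞. Then the terminating hypergeometric sums ₃F₂[−N, A, B; C, D_N; 1] = Σ_{k=0}^N (−N)_k(A)_k(B)_k/(k!(C)_k(D_N)_k) converge as N → ∞ to the Gauss hypergeometric value ₂F₁[A, B; C; q] = Σ_{k≥0}(A)_k(B)_k q^k/(k!(C)_k). -/

import Mathlib

open Filter Finset Topology


/-- Pochhammer symbol `(x)_k = x(x+1)⋯(x+k-1)` for a complex number. -/
def poch (x : ℂ) (k : ℕ) : ℂ := ∏ i ∈ Finset.range k, (x + i)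


lemma poch_neg_nat_zero {N k : ℕ} (h : N < k) : poch (-(N : ℂ)) k = 0 :=
  Finset.prod_eq_zero (Finset.mem_range.2 h) (by simp)

lemma summable_bound (A B C : ℂ) (hC : ∀ n : ℕ, C ≠ -(n : ℂ)) (r : ℝ) (hr0 : 0 < r)
    (hr1 : r < 1) :
    Summable (fun k : ℕ => ∏ i ∈ Finset.range k,
      (r * (‖A‖ + i + 1) * (‖B‖ + i + 1) / ((i + 1) * ‖C + (i : ℂ)‖))) := by
  set t : ℕ → ℝ := fun i => r * (‖A‖ + i + 1) * (‖B‖ + i + 1) / ((i + 1) * ‖C + (i : ℂ)‖) with ht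
  have hCpos : ∀ i : ℕ, 0 < ‖C + (i : ℂ)‖ := by
    intro i
    refine norm_pos_iff.2 fun h => hC i ?_
    linear_combination h
  have htpos : ∀ i, 0 < t i := by
    intro i
    have := hCpos i
    positivity
  have hbpos : ∀ k, 0 < ∏ i ∈ Finset.range k, t i :=
    fun k => Finset.prod_pos fun i _ => htpos i
  have haux : ∀ c : ℝ, Tendsto (fun k : ℕ => (c + k + 1) / (k + 1)) atTop (𝓝 1) := by
    intro c
    have h0 : Tendsto (fun k : ℕ => c / ((k : ℝ) + 1)) atTop (𝓝 0) := by
      have := (tendsto_const_div_atTop_nhds_zero_nat c).comp (tendsto_add_atTop_nat 1)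
      refine this.congr fun k => ?_
      simp [Function.comp]
    have h2 : Tendsto (fun k : ℕ => 1 + c / ((k : ℝ) + 1)) atTop (𝓝 1) := by
      simpa using h0.const_add 1
    refine h2.congr fun k => ?_
    have : ((k : ℝ) + 1) ≠ 0 := by positivity
    field_simp
    ring
  have haux2 : ∀ c : ℝ, Tendsto (fun k : ℕ => (c + k) / (k : ℝ)) atTop (𝓝 1) := by
    intro c
    have h0 : Tendsto (fun k : ℕ => c / (k : ℝ)) atTop (𝓝 0) :=
      tendsto_const_div_atTop_nhds_zero_nat c
    have h2 : Tendsto (fun k : ℕ => 1 + c / (k : ℝ)) atTop (𝓝 1) := by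
      simpa using h0.const_add 1
    refine h2.congr' ?_
    filter_upwards [eventually_ge_atTop 1] with k hk
    have hk0 : ((k : ℝ)) ≠ 0 := Nat.cast_ne_zero.2 (by omega)
    field_simp
    ring
  have hCk : Tendsto (fun k : ℕ => ‖C + (k : ℂ)‖ / k) atTop (𝓝 1) := by
    have h0 : Tendsto (fun k : ℕ => (C + k) / (k : ℂ)) atTop (𝓝 1) := by
      have hi : Tendsto (fun k : ℕ => C / (k : ℂ)) atTop (𝓝 0) := by
        rw [tendsto_zero_iff_norm_tendsto_zero]
        simpa [norm_div] using tendsto_const_div_atTop_nhds_zero_nat ‖C‖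
      have h2 : Tendsto (fun k : ℕ => C / (k : ℂ) + 1) atTop (𝓝 1) := by
        simpa using hi.add_const 1
      refine h2.congr' ?_
      filter_upwards [eventually_ge_atTop 1] with k hk
      have hk0 : ((k : ℂ)) ≠ 0 := Nat.cast_ne_zero.2 (by omega)
      field_simp
    have := h0.norm
    simp only [norm_div, Complex.norm_natCast] at this
    simpa using this
  have hratio : Tendsto (fun k : ℕ => t k) atTop (𝓝 r) := by
    have hBk : Tendsto (fun k : ℕ => (‖B‖ + k + 1) / (k : ℝ)) atTop (𝓝 1) :=
      (haux2 (‖B‖ + 1)).congr fun k => by ring_nf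
    have hB2 : Tendsto (fun k : ℕ => (‖B‖ + k + 1) / ‖C + (k : ℂ)‖) atTop (𝓝 1) := by
      have h1 : Tendsto (fun k : ℕ => ((‖B‖ + k + 1) / k) / (‖C + (k : ℂ)‖ / k))
          atTop (𝓝 1) := by
        have h := hBk.div hCk one_ne_zero
        rw [div_one] at h
        exact h
      refine h1.congr' ?_
      filter_upwards [eventually_ge_atTop 1] with k hk
      have hk0 : ((k : ℝ)) ≠ 0 := Nat.cast_ne_zero.2 (by omega)
      rw [div_div_div_cancel_right₀ hk0]
    have h3 : Tendsto (fun k : ℕ => r * ((‖A‖ + k + 1) / (k + 1) * ((‖B‖ + k + 1) / ‖C + (k : ℂ)‖)))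
        atTop (𝓝 r) := by simpa using ((haux ‖A‖).mul hB2).const_mul r
    refine h3.congr fun k => ?_
    simp only [ht]
    have hk1 : ((k : ℝ) + 1) ≠ 0 := by positivity
    have hk2 : ‖C + (k : ℂ)‖ ≠ 0 := (hCpos k).ne'
    field_simp
  have hne : ∀ᶠ k in atTop, (∏ i ∈ Finset.range k, t i) ≠ 0 :=
    Eventually.of_forall fun k => (hbpos k).ne'
  refine summable_of_ratio_test_tendsto_lt_one hr1 hne ?_
  have key : ∀ k : ℕ, t k = ‖∏ i ∈ Finset.range (k+1), t i‖ / ‖∏ i ∈ Finset.range k, t i‖ := by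
    intro k
    rw [Finset.prod_range_succ, Real.norm_eq_abs, Real.norm_eq_abs,
      abs_of_pos (mul_pos (hbpos k) (htpos k)), abs_of_pos (hbpos k)]
    rw [mul_comm, mul_div_assoc, div_self (hbpos k).ne', mul_one]
  exact hratio.congr key


/-- If `-N/D_N → q ∈ (0,1)`, the terminating sums
`₃F₂[-N, A, B; C, D_N; 1]` converge to `₂F₁[A, B; C; q]` as `N → ∞`. -/
theorem stmt_11 (A B C : ℂ) (hC : ∀ n : ℕ, C ≠ -(n : ℂ))
    (D : ℕ → ℂ) (hD : ∀ N : ℕ, ∀ n : ℕ, D N ≠ -(n : ℂ))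
    (q : ℝ) (hq0 : 0 < q) (hq1 : q < 1)
    (hlim : Filter.Tendsto (fun N : ℕ => -(N : ℂ) / D N) Filter.atTop (nhds (q : ℂ))) :
    Filter.Tendsto
      (fun N : ℕ => ∑ k ∈ Finset.range (N + 1),
        poch (-(N : ℂ)) k * poch A k * poch B k /
          ((k.factorial : ℂ) * poch C k * poch (D N) k))
      Filter.atTop
      (nhds (∑' k : ℕ, poch A k * poch B k * (q : ℂ) ^ k /
        ((k.factorial : ℂ) * poch C k))) := by
  have hDne : ∀ N, D N ≠ 0 := fun N => by simpa using hD N 0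
  have hDipos : ∀ N i : ℕ, 0 < ‖D N + (i : ℂ)‖ := fun N i =>
    norm_pos_iff.2 fun h => hD N i (by linear_combination h)
  have hCpos : ∀ i : ℕ, 0 < ‖C + (i : ℂ)‖ := fun i =>
    norm_pos_iff.2 fun h => hC i (by linear_combination h)
  set r : ℝ := (q + 1) / 2 with hr
  have hr0 : 0 < r := by simp only [hr]; linarith
  have hr1 : r < 1 := by simp only [hr]; linarith
  have hqr : q < r := by simp only [hr]; linarith
  -- ‖D N‖ → ∞
  have hn : Tendsto (fun N : ℕ => (N : ℝ) / ‖D N‖) atTop (𝓝 q) := by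
    have := hlim.norm
    simp only [norm_div, norm_neg, Complex.norm_natCast] at this
    simpa [abs_of_pos hq0] using this
  have hDnorm : Tendsto (fun N => ‖D N‖) atTop atTop := by
    have hev : ∀ᶠ N : ℕ in atTop, (N : ℝ) / (q + 1) ≤ ‖D N‖ := by
      filter_upwards [hn.eventually_lt_const (by linarith : q < q + 1)] with N hN
      have hDp : 0 < ‖D N‖ := norm_pos_iff.2 (hDne N)
      rw [div_le_iff₀ (by linarith)]
      nlinarith [(div_lt_iff₀ hDp).1 hN]
    refine tendsto_atTop_mono' _ hev ?_
    exact (tendsto_natCast_atTop_atTop (R := ℝ)).atTop_div_const (by linarith)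
  -- pointwise convergence of each factor
  have hfac : ∀ i : ℕ,
      Tendsto (fun N : ℕ => (-(N : ℂ) + i) / (D N + i)) atTop (𝓝 (q : ℂ)) := by
    intro i
    have hinv : Tendsto (fun N => (D N)⁻¹) atTop (𝓝 0) := by
      rw [tendsto_zero_iff_norm_tendsto_zero]
      simp only [norm_inv]
      exact hDnorm.inv_tendsto_atTop
    have heq : ∀ N : ℕ, (-(N : ℂ) + i) / (D N + i)
        = (-(N : ℂ) / D N + i * (D N)⁻¹) / (1 + i * (D N)⁻¹) := by
      intro N
      have h0 := hDne N
      have h1 : (-(N : ℂ) / D N + i * (D N)⁻¹) = (-(N : ℂ) + i) / D N := by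
        field_simp
      have h2 : (1 + (i : ℂ) * (D N)⁻¹) = (D N + i) / D N := by field_simp
      rw [h1, h2, div_div_div_cancel_right₀ h0]
    have hnum : Tendsto (fun N : ℕ => -(N : ℂ) / D N + i * (D N)⁻¹) atTop (𝓝 (q : ℂ)) := by
      simpa using hlim.add (hinv.const_mul (i : ℂ))
    have hden : Tendsto (fun N : ℕ => 1 + (i : ℂ) * (D N)⁻¹) atTop (𝓝 1) := by
      simpa using (hinv.const_mul (i : ℂ)).const_add 1
    have h := hnum.div hden one_ne_zero
    rw [div_one] at h
    exact h.congr fun N => (heq N).symm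
  -- pointwise convergence of the k-th term
  have hab : ∀ k : ℕ,
      Tendsto (fun N : ℕ => poch (-(N : ℂ)) k * poch A k * poch B k /
          ((k.factorial : ℂ) * poch C k * poch (D N) k)) atTop
        (𝓝 (poch A k * poch B k * (q : ℂ) ^ k / ((k.factorial : ℂ) * poch C k))) := by
    intro k
    have hterm : ∀ N : ℕ, poch (-(N : ℂ)) k * poch A k * poch B k /
        ((k.factorial : ℂ) * poch C k * poch (D N) k)
        = (∏ i ∈ Finset.range k, ((-(N : ℂ) + i) / (D N + i))) *
            (poch A k * poch B k / ((k.factorial : ℂ) * poch C k)) := by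
      intro N
      rw [Finset.prod_div_distrib]
      show _ = (poch (-(N:ℂ)) k / poch (D N) k) * _
      rw [div_mul_div_comm]
      ring_nf
    have hlim2 : Tendsto (fun N : ℕ =>
        (∏ i ∈ Finset.range k, ((-(N : ℂ) + i) / (D N + i))) *
          (poch A k * poch B k / ((k.factorial : ℂ) * poch C k))) atTop
        (𝓝 ((q : ℂ) ^ k * (poch A k * poch B k / ((k.factorial : ℂ) * poch C k)))) := by
      have := (tendsto_finset_prod (Finset.range k)
        (fun i _ => hfac i)).mul_const (poch A k * poch B k / ((k.factorial : ℂ) * poch C k))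
      simpa using this
    have hval : (q : ℂ) ^ k * (poch A k * poch B k / ((k.factorial : ℂ) * poch C k))
        = poch A k * poch B k * (q : ℂ) ^ k / ((k.factorial : ℂ) * poch C k) := by ring
    rw [← hval]
    exact hlim2.congr fun N => (hterm N).symm
  -- the dominating bound
  have hbound : ∀ᶠ N : ℕ in atTop, ∀ k : ℕ,
      ‖poch (-(N : ℂ)) k * poch A k * poch B k /
        ((k.factorial : ℂ) * poch C k * poch (D N) k)‖
      ≤ ∏ i ∈ Finset.range k,
          (r * (‖A‖ + i + 1) * (‖B‖ + i + 1) / ((i + 1) * ‖C + (i : ℂ)‖)) := by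
    have hev : ∀ᶠ N : ℕ in atTop, (N : ℝ) ≤ r * ‖D N‖ := by
      filter_upwards [hn.eventually_lt_const hqr] with N hN
      have hDp : 0 < ‖D N‖ := norm_pos_iff.2 (hDne N)
      nlinarith [(div_lt_iff₀ hDp).1 hN]
    filter_upwards [hev] with N hN k
    by_cases hk : N < k
    · rw [poch_neg_nat_zero hk]
      simp only [zero_mul, zero_div, norm_zero]
      exact Finset.prod_nonneg fun i _ => by positivity
    · push_neg at hk
      have hfact : ((k.factorial : ℂ)) = ∏ i ∈ Finset.range k, ((i : ℂ) + 1) := by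
        rw [← Finset.prod_range_add_one_eq_factorial]
        push_cast
        rfl
      have hprod : poch (-(N : ℂ)) k * poch A k * poch B k /
          ((k.factorial : ℂ) * poch C k * poch (D N) k)
          = ∏ i ∈ Finset.range k,
              ((-(N : ℂ) + i) * (A + i) * (B + i) / (((i : ℂ) + 1) * (C + i) * (D N + i))) := by
        rw [hfact]
        simp only [poch, ← Finset.prod_mul_distrib, ← Finset.prod_div_distrib]
      rw [hprod, norm_prod]
      refine Finset.prod_le_prod (fun i _ => norm_nonneg _) fun i hi => ?_
      rw [Finset.mem_range] at hi
      have hiN : (i : ℝ) < N := by exact_mod_cast lt_of_lt_of_le hi hk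
      have hi0 : (0 : ℝ) ≤ (i : ℝ) := Nat.cast_nonneg i
      rw [norm_div, norm_mul, norm_mul, norm_mul, norm_mul]
      have hnormi : ‖((i : ℂ) + 1)‖ = (i : ℝ) + 1 := by
        rw [show ((i : ℂ) + 1) = ((i + 1 : ℕ) : ℂ) by push_cast; ring, Complex.norm_natCast]
        push_cast; ring
      have hnormN : ‖(-(N : ℂ) + i)‖ = (N : ℝ) - i := by
        rw [show (-(N : ℂ) + i) = (((i - N : ℝ)) : ℂ) by push_cast; ring, Complex.norm_real,
          Real.norm_eq_abs, abs_of_nonpos (by linarith)]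
        ring
      rw [hnormi, hnormN]
      have hDge : ‖D N‖ - i ≤ ‖D N + i‖ := by
        have := norm_sub_norm_le (D N) (-(i : ℂ))
        simpa using this
      have h1 : (N : ℝ) - i ≤ r * ‖D N + i‖ := by
        nlinarith [mul_le_mul_of_nonneg_left hDge hr0.le,
          mul_nonneg hi0 (by linarith : (0 : ℝ) ≤ 1 - r)]
      have hA : ‖A + (i : ℂ)‖ ≤ ‖A‖ + i + 1 := by
        have := norm_add_le A ((i : ℂ))
        rw [Complex.norm_natCast] at this
        linarith
      have hB : ‖B + (i : ℂ)‖ ≤ ‖B‖ + i + 1 := by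
        have := norm_add_le B ((i : ℂ))
        rw [Complex.norm_natCast] at this
        linarith
      have hDp := hDipos N i
      have hCp := hCpos i
      rw [div_le_div_iff₀ (by positivity) (by positivity)]
      have key : ((N : ℝ) - i) * (‖A + (i : ℂ)‖ * ‖B + (i : ℂ)‖)
          ≤ (r * ‖D N + (i : ℂ)‖) * ((‖A‖ + i + 1) * (‖B‖ + i + 1)) :=
        mul_le_mul h1 (mul_le_mul hA hB (norm_nonneg _) (by positivity))
          (by positivity) (by positivity)
      nlinarith [mul_le_mul_of_nonneg_right key
        (show (0 : ℝ) ≤ ((i : ℝ) + 1) * ‖C + (i : ℂ)‖ by positivity)]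
  -- assemble
  have hsummable := summable_bound A B C hC r hr0 hr1
  have key := tendsto_tsum_of_dominated_convergence hsummable hab hbound
  refine key.congr fun N => ?_
  refine tsum_eq_sum fun k hk => ?_
  have hNk : N < k := by
    simp only [Finset.mem_range] at hk
    omega
  rw [poch_neg_nat_zero hNk]
  simp
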